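/- arXiv:2010.14636 — 7 statements merged into one kernel-verified Lean document; each statement's English description precedes it below -/
import Mathlib

section
/- Let λ be a partition with conjugate λ'. For i ∈ N, the up-operator u_i sends λ to the partition obtained by adding a box to column i if the result is a partition, and to 0 otherwise; the down-operator d_i removes a box from column i similarly. Then for any word x in Γ (acting right to left, with barred letters acting as down-operators), u_x(λ) ≠ 0 if and only if λ'_i − λ'_{i+1} ≥ α_i(x) for all i, and in that case u_x(λ) is the partition whose conjugate is (λ'_1 + w_1(x), λ'_2 + w_2(x), ...). -/
/-- Alphabet Γ = ℕ ∪ ℕ̄ : a letter is `(false, i)` for unbarred `i` (up-operator)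
and `(true, i)` for barred `ī` (down-operator); indices of interest are `i ≥ 1`. -/
abbrev Γ : Type := Bool × ℕ

/-- `c : ℕ → ℕ` records the column lengths `λ'_i` (for `i ≥ 1`) of a partition:
nonincreasing, eventually zero; `c 0 = 0` is a normalization. -/
def IsPartition (c : ℕ → ℕ) : Prop :=
  (∀ i, 1 ≤ i → c (i + 1) ≤ c i) ∧ c 0 = 0 ∧ ∃ N, ∀ i, N ≤ i → c i = 0

open scoped Classical in
/-- The up-operator `u_i`: add a box to column `i` if the result is a partition, else `0` (`none`). -/
noncomputable def upFun (i : ℕ) (c : ℕ → ℕ) : Option (ℕ → ℕ) :=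
  if 1 ≤ i ∧ IsPartition (Function.update c i (c i + 1)) then
    some (Function.update c i (c i + 1)) else none

open scoped Classical in
/-- The down-operator `d_i`: remove a box from column `i` if the result is a partition, else `0`. -/
noncomputable def downFun (i : ℕ) (c : ℕ → ℕ) : Option (ℕ → ℕ) :=
  if 1 ≤ i ∧ 1 ≤ c i ∧ IsPartition (Function.update c i (c i - 1)) then
    some (Function.update c i (c i - 1)) else none

/-- `u_i` extended to `0` (operators applied to `0` give `0`). -/
noncomputable def U (i : ℕ) (o : Option (ℕ → ℕ)) : Option (ℕ → ℕ) := o.bind (upFun i)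

/-- `d_i` extended to `0`. -/
noncomputable def D (i : ℕ) (o : Option (ℕ → ℕ)) : Option (ℕ → ℕ) := o.bind (downFun i)

/-- The action `u_x` of a word `x` on (possibly zero) partitions, rightmost letter acting first. -/
noncomputable def act (x : List Γ) (o : Option (ℕ → ℕ)) : Option (ℕ → ℕ) :=
  x.foldr (fun l o => if l.1 then D l.2 o else U l.2 o) o

/-- The weight `w_j(x)`: occurrences of `j` minus occurrences of `j̄` in `x`. -/
def wt (j : ℕ) (x : List Γ) : ℤ :=
  (x.count ((false, j) : Γ) : ℤ) - (x.count ((true, j) : Γ) : ℤ)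

/-- `α_i(x)`: the maximum of `w_{i+1}(x̃) - w_i(x̃)` over all suffix subwords `x̃` of `x`
(including the empty suffix, which contributes `0`). -/
def alphaV (i : ℕ) (x : List Γ) : ℤ :=
  (x.tails.map (fun s => wt (i + 1) s - wt i s)).foldr max 0

lemma foldr_max_nonneg (s : List ℤ) : 0 ≤ s.foldr max 0 := by
  induction s with
  | nil => simp
  | cons a t ih => exact le_trans ih (le_max_right _ _)

lemma le_foldr_max {a : ℤ} {s : List ℤ} (h : a ∈ s) : a ≤ s.foldr max 0 := by
  induction s with
  | nil => simp at h
  | cons b t ih =>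
    rcases List.mem_cons.mp h with h | h
    · subst h; exact le_max_left _ _
    · exact le_trans (ih h) (le_max_right _ _)

lemma self_le_alphaV (i : ℕ) (x : List Γ) : wt (i+1) x - wt i x ≤ alphaV i x :=
  le_foldr_max (List.mem_map_of_mem ((List.mem_tails _ _).mpr (List.suffix_refl x)))

lemma alphaV_cons (i : ℕ) (l : Γ) (x : List Γ) :
    alphaV i (l :: x) = max (wt (i+1) (l::x) - wt i (l::x)) (alphaV i x) := by
  simp [alphaV, List.tails_cons]

lemma wt_cons_false (i j : ℕ) (x : List Γ) :
    wt i ((false, j) :: x) = wt i x + (if i = j then 1 else 0) := by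
  by_cases h : i = j <;> simp [wt, List.count_cons, h, Prod.ext_iff] <;> omega

lemma wt_cons_true (i j : ℕ) (x : List Γ) :
    wt i ((true, j) :: x) = wt i x - (if i = j then 1 else 0) := by
  by_cases h : i = j <;> simp [wt, List.count_cons, h, Prod.ext_iff] <;> omega

lemma isPartition_up {c' : ℕ → ℕ} (hc' : IsPartition c') {j : ℕ} (hj : 1 ≤ j)
    (h : 2 ≤ j → c' j < c' (j-1)) : IsPartition (Function.update c' j (c' j + 1)) := by
  obtain ⟨hmono, h0, N, hN⟩ := hc'
  refine ⟨?_, ?_, ⟨max N (j+1), ?_⟩⟩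
  · intro i hi
    rcases eq_or_ne (i+1) j with h1 | h1
    · have hij : i ≠ j := by omega
      rw [h1, Function.update_self, Function.update_of_ne hij]
      have := h (by omega)
      have : c' j < c' i := by rw [show j - 1 = i by omega] at this; exact this
      omega
    · rcases eq_or_ne i j with h2 | h2
      · subst h2
        rw [Function.update_of_ne h1, Function.update_self]
        have := hmono i hi
        omega
      · rw [Function.update_of_ne h1, Function.update_of_ne h2]
        exact hmono i hi
  · rw [Function.update_of_ne (by omega : (0:ℕ) ≠ j)]; exact h0
  · intro i hi
    rw [Function.update_of_ne (by omega : i ≠ j)]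
    exact hN i (by omega)

lemma isPartition_down {c' : ℕ → ℕ} (hc' : IsPartition c') {j : ℕ} (hj : 1 ≤ j)
    (h : c' (j+1) < c' j) : IsPartition (Function.update c' j (c' j - 1)) := by
  obtain ⟨hmono, h0, N, hN⟩ := hc'
  refine ⟨?_, ?_, ⟨max N (j+1), ?_⟩⟩
  · intro i hi
    rcases eq_or_ne (i+1) j with h1 | h1
    · have hij : i ≠ j := by omega
      rw [h1, Function.update_self, Function.update_of_ne hij]
      have := hmono i hi
      rw [h1] at this
      omega
    · rcases eq_or_ne i j with h2 | h2
      · subst h2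
        rw [Function.update_of_ne h1, Function.update_self]
        omega
      · rw [Function.update_of_ne h1, Function.update_of_ne h2]
        exact hmono i hi
  · rw [Function.update_of_ne (by omega : (0:ℕ) ≠ j)]; exact h0
  · intro i hi
    rw [Function.update_of_ne (by omega : i ≠ j)]
    exact hN i (by omega)

lemma up_extract {c' : ℕ → ℕ} {j : ℕ}
    (h : IsPartition (Function.update c' j (c' j + 1))) (hj : 2 ≤ j) :
    c' j < c' (j-1) := by
  have h1 := h.1 (j-1) (by omega)
  rw [show j - 1 + 1 = j by omega, Function.update_self,
    Function.update_of_ne (by omega : j - 1 ≠ j)] at h1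
  omega

lemma down_extract {c' : ℕ → ℕ} {j : ℕ}
    (h : IsPartition (Function.update c' j (c' j - 1))) (h1 : 1 ≤ c' j) (hj : 1 ≤ j) :
    c' (j+1) < c' j := by
  have h2 := h.1 j hj
  rw [Function.update_self, Function.update_of_ne (by omega : j + 1 ≠ j)] at h2
  omega

lemma act_cons (l : Γ) (x : List Γ) (o : Option (ℕ → ℕ)) :
    act (l :: x) o = if l.1 then D l.2 (act x o) else U l.2 (act x o) := rfl

lemma main_lemma (x : List Γ) : (∀ l ∈ x, 1 ≤ l.2) → ∀ c : ℕ → ℕ, IsPartition c →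
    ((∀ i, 1 ≤ i → alphaV i x ≤ (c i : ℤ) - (c (i+1) : ℤ)) →
      ∃ c', act x (some c) = some c' ∧ IsPartition c' ∧
        ∀ i, 1 ≤ i → (c' i : ℤ) = (c i : ℤ) + wt i x) ∧
    (act x (some c) ≠ none →
      ∀ i, 1 ≤ i → alphaV i x ≤ (c i : ℤ) - (c (i+1) : ℤ)) := by
  induction x with
  | nil =>
    intro _ c hc
    constructor
    · intro _
      exact ⟨c, rfl, hc, fun i _ => by simp [wt]⟩
    · intro _ i hi
      have h0 : alphaV i ([] : List Γ) = 0 := by simp [alphaV, wt]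
      have := hc.1 i hi
      rw [h0]; omega
  | cons l x ih =>
    intro hx c hc
    have hj : 1 ≤ l.2 := hx l (List.mem_cons_self)
    obtain ⟨IH1, IH2⟩ := ih (fun m hm => hx m (List.mem_cons_of_mem l hm)) c hc
    obtain ⟨b, j⟩ := l
    simp only at hj
    cases b
    · -- up operator (false, j)
      constructor
      · -- part 1
        intro hcond
        have hcondx : ∀ i, 1 ≤ i → alphaV i x ≤ (c i : ℤ) - (c (i+1) : ℤ) := by
          intro i hi
          refine le_trans ?_ (hcond i hi)
          rw [alphaV_cons]; exact le_max_right _ _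
        obtain ⟨c', hact, hc'p, hc'f⟩ := IH1 hcondx
        have hp : IsPartition (Function.update c' j (c' j + 1)) := by
          apply isPartition_up hc'p hj
          intro h2j
          have hcnd := hcond (j-1) (by omega)
          rw [alphaV_cons] at hcnd
          have hnew := le_trans (le_max_left _ _) hcnd
          rw [show j - 1 + 1 = j by omega] at hnew
          rw [wt_cons_false, wt_cons_false, if_pos rfl,
            if_neg (by omega : ¬ j - 1 = j)] at hnew
          have e1 := hc'f j hj
          have e2 := hc'f (j-1) (by omega)
          omega
        have hup : upFun j c' = some (Function.update c' j (c' j + 1)) := by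
          rw [upFun, if_pos ⟨hj, hp⟩]
        refine ⟨Function.update c' j (c' j + 1), ?_, hp, ?_⟩
        · rw [act_cons]; simp only [Bool.false_eq_true, if_false]
          rw [hact]; simp [U, hup]
        · intro i hi
          rw [wt_cons_false]
          rcases eq_or_ne i j with rfl | hij
          · rw [Function.update_self, if_pos rfl]
            have := hc'f i hi
            push_cast; omega
          · rw [Function.update_of_ne hij, if_neg hij]
            have := hc'f i hi
            omega
      · -- part 2
        intro hne
        have hxne : act x (some c) ≠ none := by
          intro h
          rw [act_cons] at hne
          simp [h, U] at hne
        have hcondx := IH2 hxne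
        obtain ⟨c', hact, hc'p, hc'f⟩ := IH1 hcondx
        have hupne : upFun j c' ≠ none := by
          intro h
          rw [act_cons] at hne
          simp only [Bool.false_eq_true, if_false] at hne
          rw [hact] at hne
          simp [U, h] at hne
        have hp : IsPartition (Function.update c' j (c' j + 1)) := by
          by_cases hcnd : 1 ≤ j ∧ IsPartition (Function.update c' j (c' j + 1))
          · exact hcnd.2
          · exact absurd (by rw [upFun, if_neg hcnd]) hupne
        intro i hi
        rw [alphaV_cons]
        refine max_le ?_ (hcondx i hi)
        rw [wt_cons_false, wt_cons_false]
        rcases eq_or_ne (i+1) j with h1 | h1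
        · rw [if_pos h1, if_neg (by omega : ¬ i = j)]
          have hext := up_extract hp (by omega)
          rw [show j - 1 = i by omega] at hext
          have e1 := hc'f i hi
          have e2 := hc'f (i+1) (by omega)
          rw [show i + 1 = j from h1] at e2 ⊢
          have := hcondx i hi
          omega
        · rw [if_neg h1]
          have hs := self_le_alphaV i x
          have := hcondx i hi
          rcases eq_or_ne i j with h2 | h2
          · rw [if_pos h2]; omega
          · rw [if_neg h2]; omega
    · -- down operator (true, j)
      constructor
      · intro hcond
        have hcondx : ∀ i, 1 ≤ i → alphaV i x ≤ (c i : ℤ) - (c (i+1) : ℤ) := by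
          intro i hi
          refine le_trans ?_ (hcond i hi)
          rw [alphaV_cons]; exact le_max_right _ _
        obtain ⟨c', hact, hc'p, hc'f⟩ := IH1 hcondx
        have hlt : c' (j+1) < c' j := by
          have hcnd := hcond j hj
          rw [alphaV_cons] at hcnd
          have hnew := le_trans (le_max_left _ _) hcnd
          rw [wt_cons_true, wt_cons_true, if_pos rfl,
            if_neg (by omega : ¬ j + 1 = j)] at hnew
          have e1 := hc'f j hj
          have e2 := hc'f (j+1) (by omega)
          omega
        have hp : IsPartition (Function.update c' j (c' j - 1)) :=
          isPartition_down hc'p hj hlt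
        have hdn : downFun j c' = some (Function.update c' j (c' j - 1)) := by
          rw [downFun, if_pos ⟨hj, by omega, hp⟩]
        refine ⟨Function.update c' j (c' j - 1), ?_, hp, ?_⟩
        · rw [act_cons]; simp only [if_true]
          rw [hact]; simp [D, hdn]
        · intro i hi
          rw [wt_cons_true]
          rcases eq_or_ne i j with rfl | hij
          · rw [Function.update_self, if_pos rfl]
            have := hc'f i hi
            push_cast [Nat.cast_sub (by omega : 1 ≤ c' i)]
            omega
          · rw [Function.update_of_ne hij, if_neg hij]
            have := hc'f i hi
            omega
      · intro hne
        have hxne : act x (some c) ≠ none := by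
          intro h
          rw [act_cons] at hne
          simp [h, D] at hne
        have hcondx := IH2 hxne
        obtain ⟨c', hact, hc'p, hc'f⟩ := IH1 hcondx
        have hdnne : downFun j c' ≠ none := by
          intro h
          rw [act_cons] at hne
          simp only [if_true] at hne
          rw [hact] at hne
          simp [D, h] at hne
        have hp : 1 ≤ c' j ∧ IsPartition (Function.update c' j (c' j - 1)) := by
          by_cases hcnd : 1 ≤ j ∧ 1 ≤ c' j ∧ IsPartition (Function.update c' j (c' j - 1))
          · exact hcnd.2
          · exact absurd (by rw [downFun, if_neg hcnd]) hdnne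
        have hext := down_extract hp.2 hp.1 hj
        intro i hi
        rw [alphaV_cons]
        refine max_le ?_ (hcondx i hi)
        rw [wt_cons_true, wt_cons_true]
        have hs := self_le_alphaV i x
        have hcb := hcondx i hi
        rcases eq_or_ne i j with rfl | h2
        · rw [if_pos rfl, if_neg (by omega : ¬ i + 1 = i)]
          have e1 := hc'f i hi
          have e2 := hc'f (i+1) (by omega)
          omega
        · rw [if_neg h2]
          rcases eq_or_ne (i+1) j with h1 | h1
          · rw [if_pos h1]; omega
          · rw [if_neg h1]; omega

theorem operator_action (x : List Γ) (hx : ∀ l ∈ x, 1 ≤ l.2)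
    (c : ℕ → ℕ) (hc : IsPartition c) :
    (act x (some c) ≠ none ↔
      ∀ i, 1 ≤ i → alphaV i x ≤ (c i : ℤ) - (c (i + 1) : ℤ)) ∧
    ((∀ i, 1 ≤ i → alphaV i x ≤ (c i : ℤ) - (c (i + 1) : ℤ)) →
      ∃ c' : ℕ → ℕ, act x (some c) = some c' ∧
        ∀ i, 1 ≤ i → (c' i : ℤ) = (c i : ℤ) + wt i x) := by
  obtain ⟨P1, P2⟩ := main_lemma x hx c hc
  constructor
  · constructor
    · exact P2
    · intro h
      obtain ⟨c', hact, _, _⟩ := P1 h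
      rw [hact]; simp
  · intro h
    obtain ⟨c', hact, _, hf⟩ := P1 h
    exact ⟨c', hact, hf⟩
end

section
/- As operators on partitions, d_{i+1} ∘ u_{i+1} = u_i ∘ d_i for every i ∈ N. That is, for every partition λ, removing a box from column i+1 after adding a box to column i+1 (with the convention that an impossible step gives 0) yields the same result as adding a box to column i after removing a box from column i. -/
theorem down_up_succ (i : ℕ) (hi : 1 ≤ i) (c : ℕ → ℕ) (hc : IsPartition c) :
    D (i + 1) (U (i + 1) (some c)) = U i (D i (some c)) := by
  obtain ⟨hmono, h0, N, hN⟩ := hc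
  by_cases h : c (i + 1) < c i
  · -- both sides are `some c`
    have hup : IsPartition (Function.update c (i + 1) (c (i + 1) + 1)) := by
      refine ⟨fun j hj => ?_, ?_, ⟨max N (i + 2), fun k hk => ?_⟩⟩
      · have h1 := hmono j hj
        have h2 := hmono (i + 1) (by omega)
        simp only [Function.update_apply]
        rcases eq_or_ne j i with e | e
        · rw [e, if_pos rfl, if_neg (by omega)]; omega
        · rcases eq_or_ne j (i + 1) with e' | e'
          · rw [e', if_neg (by omega), if_pos rfl]; omega
          · rw [if_neg (by omega), if_neg e']; exact h1
      · rw [Function.update_of_ne (by omega : 0 ≠ i + 1)]; exact h0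
      · rw [Function.update_of_ne (by omega : k ≠ i + 1)]
        exact hN k (le_trans (le_max_left _ _) hk)
    have hdown : IsPartition (Function.update c i (c i - 1)) := by
      refine ⟨fun j hj => ?_, ?_, ⟨max N (i + 1), fun k hk => ?_⟩⟩
      · have h1 := hmono j hj
        simp only [Function.update_apply]
        rcases eq_or_ne j i with e | e
        · rw [e, if_neg (by omega), if_pos rfl]; omega
        · rcases eq_or_ne (j + 1) i with e' | e'
          · rw [e', if_pos rfl, if_neg e]
            rw [e'] at h1; omega
          · rw [if_neg e', if_neg e]; exact h1
      · rw [Function.update_of_ne (by omega : 0 ≠ i)]; exact h0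
      · rw [Function.update_of_ne (by omega : k ≠ i)]
        exact hN k (le_trans (le_max_left _ _) hk)
    have hU : U (i + 1) (some c) = some (Function.update c (i + 1) (c (i + 1) + 1)) := by
      show upFun (i + 1) c = _
      rw [upFun, if_pos ⟨by omega, hup⟩]
    have hD : D i (some c) = some (Function.update c i (c i - 1)) := by
      show downFun i c = _
      rw [downFun, if_pos ⟨hi, by omega, hdown⟩]
    rw [hU, hD]
    have e1 : Function.update (Function.update c (i + 1) (c (i + 1) + 1)) (i + 1)
        (Function.update c (i + 1) (c (i + 1) + 1) (i + 1) - 1) = c := by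
      simp [Function.update_idem]
    have e2 : Function.update (Function.update c i (c i - 1)) i
        (Function.update c i (c i - 1) i + 1) = c := by
      have hv : c i - 1 + 1 = c i := by omega
      simp [Function.update_idem, hv]
    have k1 : 1 ≤ i + 1 ∧ 1 ≤ Function.update c (i + 1) (c (i + 1) + 1) (i + 1) ∧
        IsPartition (Function.update (Function.update c (i + 1) (c (i + 1) + 1)) (i + 1)
          (Function.update c (i + 1) (c (i + 1) + 1) (i + 1) - 1)) := by
      refine ⟨by omega, by simp, ?_⟩
      rw [e1]; exact ⟨hmono, h0, N, hN⟩
    have k2 : 1 ≤ i ∧ IsPartition (Function.update (Function.update c i (c i - 1)) i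
        (Function.update c i (c i - 1) i + 1)) := by
      refine ⟨hi, ?_⟩
      rw [e2]; exact ⟨hmono, h0, N, hN⟩
    show downFun (i + 1) (Function.update c (i + 1) (c (i + 1) + 1)) =
      upFun i (Function.update c i (c i - 1))
    rw [downFun, upFun, if_pos k1, if_pos k2, e1, e2]
  · -- both sides are `none`
    have heq : c (i + 1) = c i := le_antisymm (hmono i hi) (by omega)
    have hU : U (i + 1) (some c) = none := by
      show upFun (i + 1) c = none
      rw [upFun, if_neg]
      rintro ⟨-, hm, -⟩
      have := hm i hi
      rw [Function.update_self, Function.update_of_ne (by omega : i ≠ i + 1)] at this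
      omega
    have hD : D i (some c) = none := by
      show downFun i c = none
      rw [downFun, if_neg]
      rintro ⟨-, hc1, hm, -⟩
      have := hm i hi
      rw [Function.update_self, Function.update_of_ne (by omega : i + 1 ≠ i)] at this
      omega
    rw [hU, hD]; rfl
end

section
/- As operators on partitions, the Knuth-type relations u_i u_{i+1} u_i = u_{i+1} u_i u_i and u_{i+1} u_i u_{i+1} = u_{i+1} u_{i+1} u_i hold for every i ∈ N (where juxtaposition denotes composition). -/
lemma part_update (i : ℕ) (hi : 1 ≤ i) (c : ℕ → ℕ) (hc : IsPartition c) :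
    IsPartition (Function.update c i (c i + 1)) ↔ (i = 1 ∨ c i < c (i - 1)) := by
  obtain ⟨hmono, h0, N, hN⟩ := hc
  constructor
  · rintro ⟨hm, -, -⟩
    rcases eq_or_lt_of_le hi with h | h
    · exact Or.inl h.symm
    · right
      have := hm (i - 1) (by omega)
      have hii : i - 1 + 1 = i := by omega
      rw [hii, Function.update_self, Function.update_of_ne (by omega)] at this
      omega
  · intro h
    refine ⟨?_, ?_, ⟨max N (i + 1), ?_⟩⟩
    · intro j hj
      rcases eq_or_ne j i with rfl | hji
      · rw [Function.update_of_ne (by omega), Function.update_self]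
        exact le_trans (hmono j hj) (Nat.le_succ _)
      rcases eq_or_ne (j + 1) i with hj1 | hj1
      · rw [hj1, Function.update_self, Function.update_of_ne hji]
        rcases h with h | h
        · omega
        · have hji : j = i - 1 := by omega
          rw [hji]
          omega
      · rw [Function.update_of_ne hj1, Function.update_of_ne hji]
        exact hmono j hj
    · rw [Function.update_of_ne (by omega)]; exact h0
    · intro j hj
      rw [Function.update_of_ne (by omega)]
      exact hN j (le_trans (le_max_left _ _) hj)

open scoped Classical in
lemma U_some_eq (i : ℕ) (hi : 1 ≤ i) (c : ℕ → ℕ) (hc : IsPartition c) :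
    U i (some c) =
      if i = 1 ∨ c i < c (i - 1) then some (Function.update c i (c i + 1)) else none := by
  show upFun i c = _
  rw [upFun]
  by_cases h : i = 1 ∨ c i < c (i - 1)
  · rw [if_pos ⟨hi, (part_update i hi c hc).2 h⟩, if_pos h]
  · rw [if_neg, if_neg h]
    rintro ⟨-, hp⟩
    exact h ((part_update i hi c hc).1 hp)

theorem knuth_relations_up (i : ℕ) (hi : 1 ≤ i) (c : ℕ → ℕ) (hc : IsPartition c) :
    U i (U (i + 1) (U i (some c))) = U (i + 1) (U i (U i (some c))) ∧
    U (i + 1) (U i (U (i + 1) (some c))) = U (i + 1) (U (i + 1) (U i (some c))) := by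
  classical
  have hmono := hc.1
  have hii : i ≠ i + 1 := by omega
  have hi1i : i - 1 ≠ i := by omega
  have hi1i1 : i - 1 ≠ i + 1 := by omega
  have hsub : i + 1 - 1 = i := rfl
  constructor
  · -- relation 1
    by_cases hA : i = 1 ∨ c i < c (i - 1)
    · set c1 := Function.update c i (c i + 1) with hc1def
      have hc1 : IsPartition c1 := (part_update i hi c hc).2 hA
      rw [U_some_eq i hi c hc, if_pos hA]
      -- values of c1
      have v1i : c1 i = c i + 1 := Function.update_self _ _ _
      have v1i1 : c1 (i + 1) = c (i + 1) := Function.update_of_ne (by omega) _ _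
      have v1m : c1 (i - 1) = c (i - 1) := Function.update_of_ne hi1i _ _
      -- LHS: apply u_{i+1}
      have hcond1 : (i + 1 = 1 ∨ c1 (i + 1) < c1 (i + 1 - 1)) := by
        right; rw [hsub, v1i1, v1i]; exact Nat.lt_succ_of_le (hmono i hi)
      rw [U_some_eq (i + 1) (by omega) c1 hc1, if_pos hcond1]
      set c2 := Function.update c1 (i + 1) (c1 (i + 1) + 1) with hc2def
      have hc2 : IsPartition c2 := (part_update (i + 1) (by omega) c1 hc1).2 hcond1
      have v2i : c2 i = c i + 1 := by rw [hc2def, Function.update_of_ne hii, v1i]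
      have v2m : c2 (i - 1) = c (i - 1) := by
        rw [hc2def, Function.update_of_ne hi1i1, v1m]
      rw [U_some_eq i hi c2 hc2]
      -- RHS: apply u_i again
      rw [U_some_eq i hi c1 hc1]
      by_cases hB : i = 1 ∨ c i + 1 < c (i - 1)
      · have hBl : i = 1 ∨ c2 i < c2 (i - 1) := by rw [v2i, v2m]; exact hB
        have hBr : i = 1 ∨ c1 i < c1 (i - 1) := by rw [v1i, v1m]; exact hB
        rw [if_pos hBl, if_pos hBr]
        set c3 := Function.update c1 i (c1 i + 1) with hc3def
        have hc3 : IsPartition c3 := (part_update i hi c1 hc1).2 hBr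
        have v3i : c3 i = c i + 2 := by rw [hc3def, Function.update_self, v1i]
        have v3i1 : c3 (i + 1) = c (i + 1) := by
          rw [hc3def, Function.update_of_ne (by omega), v1i1]
        have hcond3 : (i + 1 = 1 ∨ c3 (i + 1) < c3 (i + 1 - 1)) := by
          right; rw [hsub, v3i1, v3i]; have := hmono i hi; omega
        rw [U_some_eq (i + 1) (by omega) c3 hc3, if_pos hcond3]
        congr 1
        funext j
        simp only [hc2def, hc3def, hc1def, Function.update_apply]
        by_cases h1 : j = i <;> by_cases h2 : j = i + 1 <;>
          simp [h1, h2]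
      · have hBl : ¬(i = 1 ∨ c2 i < c2 (i - 1)) := by rw [v2i, v2m]; exact hB
        have hBr : ¬(i = 1 ∨ c1 i < c1 (i - 1)) := by rw [v1i, v1m]; exact hB
        rw [if_neg hBl, if_neg hBr]
        rfl
    · rw [U_some_eq i hi c hc, if_neg hA]
      rfl
  · -- relation 2
    by_cases hA : i = 1 ∨ c i < c (i - 1)
    swap
    · -- u_i undefined on both sides
      rw [U_some_eq i hi c hc, if_neg hA]
      by_cases hC : c (i + 1) < c i
      swap
      · have hCl : ¬(i + 1 = 1 ∨ c (i + 1) < c (i + 1 - 1)) := by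
          rw [hsub]; push_neg; exact ⟨by omega, by omega⟩
        rw [U_some_eq (i + 1) (by omega) c hc, if_neg hCl]
        rfl
      · have hCl : (i + 1 = 1 ∨ c (i + 1) < c (i + 1 - 1)) := Or.inr (by rw [hsub]; exact hC)
        rw [U_some_eq (i + 1) (by omega) c hc, if_pos hCl]
        set c1 := Function.update c (i + 1) (c (i + 1) + 1) with hc1def
        have hc1 : IsPartition c1 := (part_update (i + 1) (by omega) c hc).2 hCl
        have v1i : c1 i = c i := Function.update_of_ne hii _ _
        have v1m : c1 (i - 1) = c (i - 1) := Function.update_of_ne hi1i1 _ _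
        have hAl : ¬(i = 1 ∨ c1 i < c1 (i - 1)) := by rw [v1i, v1m]; exact hA
        rw [U_some_eq i hi c1 hc1, if_neg hAl]
        rfl
    · set c1 := Function.update c i (c i + 1) with hc1def
      have hc1 : IsPartition c1 := (part_update i hi c hc).2 hA
      have v1i : c1 i = c i + 1 := Function.update_self _ _ _
      have v1i1 : c1 (i + 1) = c (i + 1) := Function.update_of_ne (by omega) _ _
      rw [U_some_eq i hi c hc, if_pos hA]
      -- RHS : u_{i+1} on c1 always defined
      have hcond1 : (i + 1 = 1 ∨ c1 (i + 1) < c1 (i + 1 - 1)) := by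
        right; rw [hsub, v1i1, v1i]; exact Nat.lt_succ_of_le (hmono i hi)
      rw [U_some_eq (i + 1) (by omega) c1 hc1, if_pos hcond1]
      set c2 := Function.update c1 (i + 1) (c1 (i + 1) + 1) with hc2def
      have hc2 : IsPartition c2 := (part_update (i + 1) (by omega) c1 hc1).2 hcond1
      have v2i : c2 i = c i + 1 := by rw [hc2def, Function.update_of_ne hii, v1i]
      have v2i1 : c2 (i + 1) = c (i + 1) + 1 := by
        rw [hc2def, Function.update_self, v1i1]
      rw [U_some_eq (i + 1) (by omega) c2 hc2]
      by_cases hC : c (i + 1) < c i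
      · -- LHS defined throughout
        have hCl : (i + 1 = 1 ∨ c (i + 1) < c (i + 1 - 1)) := Or.inr (by rw [hsub]; exact hC)
        rw [U_some_eq (i + 1) (by omega) c hc, if_pos hCl]
        set d1 := Function.update c (i + 1) (c (i + 1) + 1) with hd1def
        have hd1 : IsPartition d1 := (part_update (i + 1) (by omega) c hc).2 hCl
        have w1i : d1 i = c i := Function.update_of_ne hii _ _
        have w1i1 : d1 (i + 1) = c (i + 1) + 1 := Function.update_self _ _ _
        have w1m : d1 (i - 1) = c (i - 1) := Function.update_of_ne hi1i1 _ _
        have hAl : (i = 1 ∨ d1 i < d1 (i - 1)) := by rw [w1i, w1m]; exact hA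
        rw [U_some_eq i hi d1 hd1, if_pos hAl]
        set d2 := Function.update d1 i (d1 i + 1) with hd2def
        have hd2 : IsPartition d2 := (part_update i hi d1 hd1).2 hAl
        have w2i : d2 i = c i + 1 := by rw [hd2def, Function.update_self, w1i]
        have w2i1 : d2 (i + 1) = c (i + 1) + 1 := by
          rw [hd2def, Function.update_of_ne (by omega), w1i1]
        have hcondL : (i + 1 = 1 ∨ d2 (i + 1) < d2 (i + 1 - 1)) := by
          right; rw [hsub, w2i1, w2i]; omega
        rw [U_some_eq (i + 1) (by omega) d2 hd2, if_pos hcondL]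
        have hcondR : (i + 1 = 1 ∨ c2 (i + 1) < c2 (i + 1 - 1)) := by
          right; rw [hsub, v2i1, v2i]; omega
        rw [if_pos hcondR]
        congr 1
        funext j
        simp only [hd2def, hd1def, hc2def, hc1def, Function.update_apply]
        by_cases h1 : j = i <;> by_cases h2 : j = i + 1 <;>
          simp [h1, h2]
      · -- LHS: u_{i+1} undefined on c; RHS: second u_{i+1} undefined on c2
        have hCl : ¬(i + 1 = 1 ∨ c (i + 1) < c (i + 1 - 1)) := by
          rw [hsub]; push_neg; exact ⟨by omega, by omega⟩
        rw [U_some_eq (i + 1) (by omega) c hc, if_neg hCl]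
        have hCr : ¬(i + 1 = 1 ∨ c2 (i + 1) < c2 (i + 1 - 1)) := by
          rw [hsub, v2i1, v2i]; push_neg; exact ⟨by omega, by omega⟩
        rw [if_neg hCr]
        rfl
end

section
/- As operators on partitions, d_i d_{i+1} d_i = d_i d_i d_{i+1} and d_{i+1} d_i d_{i+1} = d_i d_{i+1} d_{i+1} for every i ∈ N. -/
lemma part_down (i : ℕ) (hi : 1 ≤ i) (c : ℕ → ℕ) (hc : IsPartition c)
    (h : c (i + 1) < c i) : IsPartition (Function.update c i (c i - 1)) := by
  obtain ⟨hmono, h0, N, hN⟩ := hc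
  refine ⟨?_, ?_, ⟨max N (i + 1), ?_⟩⟩
  · intro j hj
    by_cases hji : j = i
    · subst hji
      rw [Function.update_of_ne (by omega), Function.update_self]
      omega
    · by_cases hj1 : j + 1 = i
      · rw [hj1, Function.update_self, Function.update_of_ne hji]
        have := hmono j hj; rw [hj1] at this; omega
      · rw [Function.update_of_ne hj1, Function.update_of_ne hji]
        exact hmono j hj
  · rw [Function.update_of_ne (by omega)]; exact h0
  · intro j hj
    rw [Function.update_of_ne (by omega : j ≠ i)]
    exact hN j (le_trans (le_max_left _ _) hj)

lemma down_char (i : ℕ) (hi : 1 ≤ i) (c : ℕ → ℕ) (hc : IsPartition c) :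
    downFun i c = if c (i + 1) < c i then some (Function.update c i (c i - 1)) else none := by
  unfold downFun
  split_ifs with h1 h2 h2
  · rfl
  · have := h1.2.2.1 i hi
    rw [Function.update_self, Function.update_of_ne (by omega)] at this
    have := h1.2.1
    omega
  · exact absurd ⟨hi, by omega, part_down i hi c hc h2⟩ h1
  · rfl

lemma D_some (i : ℕ) (hi : 1 ≤ i) (c : ℕ → ℕ) (hc : IsPartition c)
    (h : c (i + 1) < c i) :
    D i (some c) = some (Function.update c i (c i - 1)) := by
  simp [D, down_char i hi c hc, h]

lemma D_none (i : ℕ) (hi : 1 ≤ i) (c : ℕ → ℕ) (hc : IsPartition c)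
    (h : ¬ c (i + 1) < c i) : D i (some c) = none := by
  simp [D, down_char i hi c hc, h]

lemma D_nil (i : ℕ) : D i none = none := rfl

theorem knuth_relations_down (i : ℕ) (hi : 1 ≤ i) (c : ℕ → ℕ) (hc : IsPartition c) :
    D i (D (i + 1) (D i (some c))) = D i (D i (D (i + 1) (some c))) ∧
    D (i + 1) (D i (D (i + 1) (some c))) = D i (D (i + 1) (D (i + 1) (some c))) := by
  have hba : c (i + 1) ≤ c i := hc.1 i hi
  have heb : c (i + 2) ≤ c (i + 1) := hc.1 (i + 1) (by omega)
  constructor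
  · by_cases h1 : c (i + 1) < c i
    · by_cases h2 : c (i + 2) < c (i + 1)
      · rw [D_some i hi c hc h1]
        rw [D_some (i+1) (by omega) _ (part_down i hi c hc h1)
          (by simp only [Function.update_apply, show i+1+1 = i+2 from rfl]; split_ifs <;> omega)]
        rw [D_some i hi _ (part_down (i+1) (by omega) _ (part_down i hi c hc h1)
            (by simp only [Function.update_apply, show i+1+1 = i+2 from rfl]; split_ifs <;> omega))
          (by simp only [Function.update_apply, show i+1+1 = i+2 from rfl]; split_ifs <;> omega)]
        rw [D_some (i+1) (by omega) c hc
          (by simp only [show i+1+1 = i+2 from rfl]; exact h2)]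
        rw [D_some i hi _ (part_down (i+1) (by omega) c hc
            (by simp only [show i+1+1 = i+2 from rfl]; exact h2))
          (by simp only [Function.update_apply, show i+1+1 = i+2 from rfl]; split_ifs <;> omega)]
        rw [D_some i hi _ (part_down i hi _ (part_down (i+1) (by omega) c hc
              (by simp only [show i+1+1 = i+2 from rfl]; exact h2))
            (by simp only [Function.update_apply, show i+1+1 = i+2 from rfl]; split_ifs <;> omega))
          (by simp only [Function.update_apply, show i+1+1 = i+2 from rfl]; split_ifs <;> omega)]
        congr 1
        funext j
        simp only [Function.update_apply, show i+1+1 = i+2 from rfl]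
        split_ifs <;> omega
      · -- LHS: d_i succeeds, then d_{i+1} fails; RHS: d_{i+1} fails immediately
        rw [D_some i hi c hc h1]
        rw [D_none (i+1) (by omega) _ (part_down i hi c hc h1)
          (by simp only [Function.update_apply, show i+1+1 = i+2 from rfl]; split_ifs <;> omega)]
        rw [D_none (i+1) (by omega) c hc
          (by simp only [show i+1+1 = i+2 from rfl]; exact h2)]
        rfl
    · by_cases h2 : c (i + 2) < c (i + 1)
      · -- LHS fails at first d_i; RHS: d_{i+1} then d_i succeed, second d_i fails
        rw [D_none i hi c hc h1]
        rw [D_some (i+1) (by omega) c hc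
          (by simp only [show i+1+1 = i+2 from rfl]; exact h2)]
        rw [D_some i hi _ (part_down (i+1) (by omega) c hc
            (by simp only [show i+1+1 = i+2 from rfl]; exact h2))
          (by simp only [Function.update_apply, show i+1+1 = i+2 from rfl]; split_ifs <;> omega)]
        rw [D_none i hi _ (part_down i hi _ (part_down (i+1) (by omega) c hc
              (by simp only [show i+1+1 = i+2 from rfl]; exact h2))
            (by simp only [Function.update_apply, show i+1+1 = i+2 from rfl]; split_ifs <;> omega))
          (by simp only [Function.update_apply, show i+1+1 = i+2 from rfl]; split_ifs <;> omega)]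
        rfl
      · rw [D_none i hi c hc h1]
        rw [D_none (i+1) (by omega) c hc
          (by simp only [show i+1+1 = i+2 from rfl]; exact h2)]
        rfl
  · by_cases h2 : c (i + 2) < c (i + 1)
    · by_cases h3 : c (i + 2) + 1 < c (i + 1)
      · -- all succeed
        rw [D_some (i+1) (by omega) c hc
          (by simp only [show i+1+1 = i+2 from rfl]; exact h2)]
        rw [D_some i hi _ (part_down (i+1) (by omega) c hc
            (by simp only [show i+1+1 = i+2 from rfl]; exact h2))
          (by simp only [Function.update_apply, show i+1+1 = i+2 from rfl]; split_ifs <;> omega)]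
        rw [D_some (i+1) (by omega) _ (part_down i hi _ (part_down (i+1) (by omega) c hc
              (by simp only [show i+1+1 = i+2 from rfl]; exact h2))
            (by simp only [Function.update_apply, show i+1+1 = i+2 from rfl]; split_ifs <;> omega))
          (by simp only [Function.update_apply, show i+1+1 = i+2 from rfl]; split_ifs <;> omega)]
        rw [D_some (i+1) (by omega) _ (part_down (i+1) (by omega) c hc
            (by simp only [show i+1+1 = i+2 from rfl]; exact h2))
          (by simp only [Function.update_apply, show i+1+1 = i+2 from rfl]; split_ifs <;> omega)]
        rw [D_some i hi _ (part_down (i+1) (by omega) _ (part_down (i+1) (by omega) c hc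
              (by simp only [show i+1+1 = i+2 from rfl]; exact h2))
            (by simp only [Function.update_apply, show i+1+1 = i+2 from rfl]; split_ifs <;> omega))
          (by simp only [Function.update_apply, show i+1+1 = i+2 from rfl]; split_ifs <;> omega)]
        congr 1
        funext j
        simp only [Function.update_apply, show i+1+1 = i+2 from rfl]
        split_ifs <;> omega
      · -- e = b - 1 : both sides fail at the last / second d_{i+1}
        rw [D_some (i+1) (by omega) c hc
          (by simp only [show i+1+1 = i+2 from rfl]; exact h2)]
        rw [D_some i hi _ (part_down (i+1) (by omega) c hc
            (by simp only [show i+1+1 = i+2 from rfl]; exact h2))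
          (by simp only [Function.update_apply, show i+1+1 = i+2 from rfl]; split_ifs <;> omega)]
        rw [D_none (i+1) (by omega) _ (part_down i hi _ (part_down (i+1) (by omega) c hc
              (by simp only [show i+1+1 = i+2 from rfl]; exact h2))
            (by simp only [Function.update_apply, show i+1+1 = i+2 from rfl]; split_ifs <;> omega))
          (by simp only [Function.update_apply, show i+1+1 = i+2 from rfl]; split_ifs <;> omega)]
        rw [D_none (i+1) (by omega) _ (part_down (i+1) (by omega) c hc
            (by simp only [show i+1+1 = i+2 from rfl]; exact h2))
          (by simp only [Function.update_apply, show i+1+1 = i+2 from rfl]; split_ifs <;> omega)]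
        rfl
    · rw [D_none (i+1) (by omega) c hc
        (by simp only [show i+1+1 = i+2 from rfl]; exact h2)]
      rfl
end

section
/- As operators on partitions, u_{i+1} u_{i+2} u_{i+1} u_i = u_{i+1} u_{i+2} u_i u_{i+1} for every i ∈ N. -/
lemma isPartition_update {c : ℕ → ℕ} (hc : IsPartition c) {i : ℕ} (hi : 1 ≤ i)
    (h : i = 1 ∨ c i < c (i - 1)) : IsPartition (Function.update c i (c i + 1)) := by
  obtain ⟨hmono, h0, N, hN⟩ := hc
  refine ⟨?_, ?_, ⟨max N (i + 1), ?_⟩⟩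
  · intro j hj
    rcases eq_or_ne (j + 1) i with heq | hne1
    · rw [heq, Function.update_self, Function.update_of_ne (by omega)]
      rcases h with h1 | h2
      · omega
      · have : i - 1 = j := by omega
        rw [this] at h2; omega
    · rw [Function.update_of_ne hne1]
      rcases eq_or_ne j i with rfl | hne2
      · rw [Function.update_self]; exact le_trans (hmono _ hj) (Nat.le_succ _)
      · rw [Function.update_of_ne hne2]; exact hmono _ hj
  · rw [Function.update_of_ne (by omega)]; exact h0
  · intro j hj
    rw [Function.update_of_ne (by omega)]
    exact hN j (by omega)

lemma upFun_some {c : ℕ → ℕ} (hc : IsPartition c) {i : ℕ} (hi : 1 ≤ i)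
    (h : i = 1 ∨ c i < c (i - 1)) :
    upFun i c = some (Function.update c i (c i + 1)) := by
  rw [upFun, if_pos ⟨hi, isPartition_update hc hi h⟩]

lemma upFun_none {c : ℕ → ℕ} {i : ℕ} (hi : 2 ≤ i) (h : ¬ c i < c (i - 1)) :
    upFun i c = none := by
  rw [upFun, if_neg]
  rintro ⟨-, hmono, -⟩
  have h2 := hmono (i - 1) (by omega)
  rw [show i - 1 + 1 = i by omega, Function.update_self,
    Function.update_of_ne (by omega)] at h2
  omega
theorem degree_four_relation (i : ℕ) (hi : 1 ≤ i) (c : ℕ → ℕ) (hc : IsPartition c) :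
    U (i + 1) (U (i + 2) (U (i + 1) (U i (some c)))) =
    U (i + 1) (U (i + 2) (U i (U (i + 1) (some c)))) := by
  have hA : c (i + 1) ≤ c i := hc.1 i hi
  have hB : c (i + 2) ≤ c (i + 1) := hc.1 (i + 1) (by omega)
  simp only [U, Option.bind_some]
  by_cases H1 : i = 1 ∨ c i < c (i - 1)
  · rw [upFun_some hc hi H1, Option.bind_some]
    have p1 : IsPartition (Function.update c i (c i + 1)) := isPartition_update hc hi H1
    set c1 := Function.update c i (c i + 1) with hc1def
    have v1a : c1 (i + 1) = c (i + 1) := Function.update_of_ne (by omega) _ _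
    have v1b : c1 i = c i + 1 := Function.update_self _ _ _
    have v1c : c1 (i + 2) = c (i + 2) := Function.update_of_ne (by omega) _ _
    have s2 : i + 1 = 1 ∨ c1 (i + 1) < c1 (i + 1 - 1) :=
      Or.inr (by rw [Nat.add_sub_cancel, v1a, v1b]; omega)
    rw [upFun_some p1 (by omega) s2, Option.bind_some]
    have p2 : IsPartition (Function.update c1 (i + 1) (c1 (i + 1) + 1)) :=
      isPartition_update p1 (by omega) s2
    set c2 := Function.update c1 (i + 1) (c1 (i + 1) + 1) with hc2def
    have v2a : c2 (i + 2) = c (i + 2) := by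
      rw [hc2def, Function.update_of_ne (by omega), v1c]
    have v2b : c2 (i + 1) = c (i + 1) + 1 := by
      rw [hc2def, Function.update_self, v1a]
    have v2c : c2 i = c i + 1 := by
      rw [hc2def, Function.update_of_ne (by omega), v1b]
    have s3 : i + 2 = 1 ∨ c2 (i + 2) < c2 (i + 2 - 1) :=
      Or.inr (by rw [show i + 2 - 1 = i + 1 from by omega, v2a, v2b]; omega)
    rw [upFun_some p2 (by omega) s3, Option.bind_some]
    have p3 : IsPartition (Function.update c2 (i + 2) (c2 (i + 2) + 1)) :=
      isPartition_update p2 (by omega) s3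
    set c3 := Function.update c2 (i + 2) (c2 (i + 2) + 1) with hc3def
    have v3a : c3 (i + 1) = c (i + 1) + 1 := by
      rw [hc3def, Function.update_of_ne (by omega), v2b]
    have v3b : c3 i = c i + 1 := by
      rw [hc3def, Function.update_of_ne (by omega), v2c]
    have v3c : c3 (i + 2) = c (i + 2) + 1 := by
      rw [hc3def, Function.update_self, v2a]
    by_cases H2 : c (i + 1) < c i
    · -- RHS chain
      have s1' : i + 1 = 1 ∨ c (i + 1) < c (i + 1 - 1) :=
        Or.inr (by rw [Nat.add_sub_cancel]; exact H2)
      rw [upFun_some hc (by omega) s1', Option.bind_some]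
      have p1' : IsPartition (Function.update c (i + 1) (c (i + 1) + 1)) :=
        isPartition_update hc (by omega) s1'
      set d1 := Function.update c (i + 1) (c (i + 1) + 1) with hd1def
      have w1a : d1 i = c i := Function.update_of_ne (by omega) _ _
      have w1b : d1 (i - 1) = c (i - 1) := Function.update_of_ne (by omega) _ _
      have w1c : d1 (i + 1) = c (i + 1) + 1 := Function.update_self _ _ _
      have w1d : d1 (i + 2) = c (i + 2) := Function.update_of_ne (by omega) _ _
      have s2' : i = 1 ∨ d1 i < d1 (i - 1) := by
        rcases H1 with h | h
        · exact Or.inl h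
        · exact Or.inr (by rw [w1a, w1b]; exact h)
      rw [upFun_some p1' hi s2', Option.bind_some]
      have p2' : IsPartition (Function.update d1 i (d1 i + 1)) :=
        isPartition_update p1' hi s2'
      set d2 := Function.update d1 i (d1 i + 1) with hd2def
      have w2a : d2 (i + 2) = c (i + 2) := by
        rw [hd2def, Function.update_of_ne (by omega), w1d]
      have w2b : d2 (i + 1) = c (i + 1) + 1 := by
        rw [hd2def, Function.update_of_ne (by omega), w1c]
      have w2c : d2 i = c i + 1 := by
        rw [hd2def, Function.update_self, w1a]
      have s3' : i + 2 = 1 ∨ d2 (i + 2) < d2 (i + 2 - 1) :=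
        Or.inr (by rw [show i + 2 - 1 = i + 1 from by omega, w2a, w2b]; omega)
      rw [upFun_some p2' (by omega) s3', Option.bind_some]
      have p3' : IsPartition (Function.update d2 (i + 2) (d2 (i + 2) + 1)) :=
        isPartition_update p2' (by omega) s3'
      set d3 := Function.update d2 (i + 2) (d2 (i + 2) + 1) with hd3def
      have w3a : d3 (i + 1) = c (i + 1) + 1 := by
        rw [hd3def, Function.update_of_ne (by omega), w2b]
      have w3b : d3 i = c i + 1 := by
        rw [hd3def, Function.update_of_ne (by omega), w2c]
      have w3c : d3 (i + 2) = c (i + 2) + 1 := by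
        rw [hd3def, Function.update_self, w2a]
      have s4 : i + 1 + 1 - 1 = i + 1 := by omega
      have sL : i + 1 = 1 ∨ c3 (i + 1) < c3 (i + 1 - 1) :=
        Or.inr (by rw [Nat.add_sub_cancel, v3a, v3b]; omega)
      have sR : i + 1 = 1 ∨ d3 (i + 1) < d3 (i + 1 - 1) :=
        Or.inr (by rw [Nat.add_sub_cancel, w3a, w3b]; omega)
      rw [upFun_some p3 (by omega) sL, upFun_some p3' (by omega) sR]
      have vk : ∀ k, k ≠ i → k ≠ i + 1 → k ≠ i + 2 → c3 k = c k := by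
        intro k h1 h2 h3
        rw [hc3def, Function.update_of_ne h3, hc2def, Function.update_of_ne h2,
          hc1def, Function.update_of_ne h1]
      have wk : ∀ k, k ≠ i → k ≠ i + 1 → k ≠ i + 2 → d3 k = c k := by
        intro k h1 h2 h3
        rw [hd3def, Function.update_of_ne h3, hd2def, Function.update_of_ne h1,
          hd1def, Function.update_of_ne h2]
      congr 1
      funext k
      by_cases h1 : k = i + 1
      · subst h1; rw [Function.update_self, Function.update_self, v3a, w3a]
      · rw [Function.update_of_ne h1, Function.update_of_ne h1]
        by_cases h2 : k = i + 2
        · subst h2; rw [v3c, w3c]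
        · by_cases h3 : k = i
          · subst h3; rw [v3b, w3b]
          · rw [vk k h3 h1 h2, wk k h3 h1 h2]
    · -- LHS fails at last step, RHS fails at first step
      have eL : upFun (i + 1) c3 = none := by
        apply upFun_none (by omega)
        rw [Nat.add_sub_cancel, v3a, v3b]; omega
      have eR : upFun (i + 1) c = none := by
        apply upFun_none (by omega)
        rw [Nat.add_sub_cancel]; omega
      rw [eL, eR]
      simp
  · -- u_i fails on c
    push_neg at H1
    obtain ⟨hne1, hge⟩ := H1
    have hi2 : 2 ≤ i := by omega
    rw [upFun_none hi2 (by omega)]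
    simp only [Option.bind_none]
    by_cases H2 : c (i + 1) < c i
    · have s1' : i + 1 = 1 ∨ c (i + 1) < c (i + 1 - 1) :=
        Or.inr (by rw [Nat.add_sub_cancel]; exact H2)
      rw [upFun_some hc (by omega) s1', Option.bind_some]
      have eR : upFun i (Function.update c (i + 1) (c (i + 1) + 1)) = none := by
        apply upFun_none hi2
        rw [Function.update_of_ne (by omega), Function.update_of_ne (by omega)]
        omega
      rw [eR]
      simp
    · have eR : upFun (i + 1) c = none := by
        apply upFun_none (by omega)
        rw [Nat.add_sub_cancel]; omega
      rw [eR]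
      simp
end

section
/- Fix t ∈ N with t > 1. As operators on partitions, for every i ≥ 0, u_t^{i+1} d_t^{i} = u_t^{i+1} d_t^{i+1} u_t and u_t^{i} d_t^{i+1} = d_t u_t^{i+1} d_t^{i+1}. -/
lemma isPartition_update_iff {c : ℕ → ℕ} (hc : IsPartition c) {t : ℕ} (ht : 2 ≤ t) (v : ℕ) :
    IsPartition (Function.update c t v) ↔ (c (t + 1) ≤ v ∧ v ≤ c (t - 1)) := by
  constructor
  · intro h
    have h1 := h.1 t (by omega)
    have h2 := h.1 (t - 1) (by omega)
    rw [show t - 1 + 1 = t from by omega] at h2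
    rw [Function.update_self, Function.update_of_ne (by omega)] at h1
    rw [Function.update_self, Function.update_of_ne (by omega)] at h2
    exact ⟨h1, h2⟩
  · rintro ⟨hv1, hv2⟩
    refine ⟨?_, ?_, ?_⟩
    · intro j hj
      have h0 := hc.1 j hj
      rcases eq_or_ne (j + 1) t with h1 | h1
      · rw [Function.update_apply, Function.update_apply, if_pos h1, if_neg (by omega)]
        have : j = t - 1 := by omega
        subst this
        exact hv2
      · rcases eq_or_ne j t with h2 | h2
        · rw [Function.update_apply, Function.update_apply, if_neg h1, if_pos h2]
          subst h2
          exact hv1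
        · rw [Function.update_of_ne h1, Function.update_of_ne h2]
          exact h0
    · rw [Function.update_of_ne (by omega)]
      exact hc.2.1
    · obtain ⟨N, hN⟩ := hc.2.2
      refine ⟨max N (t + 1), fun j hj => ?_⟩
      rw [Function.update_of_ne (by omega)]
      exact hN j (le_trans (le_max_left _ _) hj)

lemma upFun_eq {c : ℕ → ℕ} (hc : IsPartition c) {t : ℕ} (ht : 2 ≤ t) :
    upFun t c = if c t + 1 ≤ c (t - 1) then some (Function.update c t (c t + 1)) else none := by
  have hmono : c (t + 1) ≤ c t := hc.1 t (by omega)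
  have hcond : (1 ≤ t ∧ IsPartition (Function.update c t (c t + 1))) ↔ c t + 1 ≤ c (t - 1) := by
    rw [isPartition_update_iff hc ht]
    constructor
    · rintro ⟨_, _, h⟩; exact h
    · intro h; exact ⟨by omega, by omega, h⟩
  unfold upFun
  simp only [hcond]

lemma downFun_eq {c : ℕ → ℕ} (hc : IsPartition c) {t : ℕ} (ht : 2 ≤ t) :
    downFun t c = if c (t + 1) + 1 ≤ c t then some (Function.update c t (c t - 1)) else none := by
  have hmono2 : c t ≤ c (t - 1) := by
    have h := hc.1 (t - 1) (by omega)
    rwa [show t - 1 + 1 = t from by omega] at h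
  have hcond : (1 ≤ t ∧ 1 ≤ c t ∧ IsPartition (Function.update c t (c t - 1))) ↔
      c (t + 1) + 1 ≤ c t := by
    rw [isPartition_update_iff hc ht]
    constructor
    · rintro ⟨_, h1, h2, _⟩; omega
    · intro h; exact ⟨by omega, by omega, by omega, by omega⟩
  unfold downFun
  simp only [hcond]

lemma D_none_s11 (t k : ℕ) : (D t)^[k] none = none := by
  induction k with
  | zero => rfl
  | succ k ih => rw [Function.iterate_succ_apply]; exact ih

lemma U_none (t k : ℕ) : (U t)^[k] none = none := by
  induction k with
  | zero => rfl
  | succ k ih => rw [Function.iterate_succ_apply]; exact ih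

lemma D_iter {t : ℕ} (ht : 2 ≤ t) (k : ℕ) (c : ℕ → ℕ) (hc : IsPartition c) :
    (D t)^[k] (some c) =
      if c (t + 1) + k ≤ c t then some (Function.update c t (c t - k)) else none := by
  induction k generalizing c with
  | zero =>
    rw [if_pos (by simpa using hc.1 t (by omega))]
    simp [Function.update_eq_self]
  | succ k ih =>
    have hmono2 : c t ≤ c (t - 1) := by
      have h := hc.1 (t - 1) (by omega)
      rwa [show t - 1 + 1 = t from by omega] at h
    rw [Function.iterate_succ_apply, show D t (some c) = downFun t c from rfl, downFun_eq hc ht]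
    by_cases h : c (t + 1) + 1 ≤ c t
    · rw [if_pos h]
      set c' := Function.update c t (c t - 1) with hc'def
      have hc' : IsPartition c' := by
        rw [hc'def, isPartition_update_iff hc ht]
        omega
      rw [ih c' hc']
      have e1 : c' (t + 1) = c (t + 1) := Function.update_of_ne (by omega) _ _
      have e2 : c' t = c t - 1 := Function.update_self _ _ _
      rw [e1, e2]
      have e3 : Function.update c' t (c t - 1 - k) = Function.update c t (c t - (k + 1)) := by
        rw [hc'def, Function.update_idem, show c t - 1 - k = c t - (k + 1) from by omega]
      by_cases h3 : c (t + 1) + k ≤ c t - 1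
      · rw [if_pos h3, if_pos (by omega), e3]
      · rw [if_neg h3, if_neg (by omega)]
    · rw [if_neg h, if_neg (by omega)]
      exact D_none_s11 t k

lemma U_iter {t : ℕ} (ht : 2 ≤ t) (k : ℕ) (c : ℕ → ℕ) (hc : IsPartition c) :
    (U t)^[k] (some c) =
      if c t + k ≤ c (t - 1) then some (Function.update c t (c t + k)) else none := by
  induction k generalizing c with
  | zero =>
    have hmono2 : c t ≤ c (t - 1) := by
      have h := hc.1 (t - 1) (by omega)
      rwa [show t - 1 + 1 = t from by omega] at h
    rw [if_pos (by omega)]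
    simp [Function.update_eq_self]
  | succ k ih =>
    rw [Function.iterate_succ_apply, show U t (some c) = upFun t c from rfl, upFun_eq hc ht]
    by_cases h : c t + 1 ≤ c (t - 1)
    · rw [if_pos h]
      set c' := Function.update c t (c t + 1) with hc'def
      have hc' : IsPartition c' := by
        rw [hc'def, isPartition_update_iff hc ht]
        have := hc.1 t (by omega)
        omega
      rw [ih c' hc']
      have e1 : c' (t - 1) = c (t - 1) := Function.update_of_ne (by omega) _ _
      have e2 : c' t = c t + 1 := Function.update_self _ _ _
      rw [e1, e2]
      have e3 : Function.update c' t (c t + 1 + k) = Function.update c t (c t + (k + 1)) := by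
        rw [hc'def, Function.update_idem, show c t + 1 + k = c t + (k + 1) from by omega]
      by_cases h3 : c t + 1 + k ≤ c (t - 1)
      · rw [if_pos h3, if_pos (by omega), e3]
      · rw [if_neg h3, if_neg (by omega)]
    · rw [if_neg h, if_neg (by omega)]
      exact U_none t k

theorem fixed_t_relations (t : ℕ) (ht : 1 < t) (i : ℕ)
    (c : ℕ → ℕ) (hc : IsPartition c) :
    (U t)^[i + 1] ((D t)^[i] (some c)) =
      (U t)^[i + 1] ((D t)^[i + 1] (U t (some c))) ∧
    (U t)^[i] ((D t)^[i + 1] (some c)) =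
      D t ((U t)^[i + 1] ((D t)^[i + 1] (some c))) := by
  have ht2 : 2 ≤ t := ht
  have hab : c (t + 1) ≤ c t := hc.1 t (by omega)
  have hbc : c t ≤ c (t - 1) := by
    have h := hc.1 (t - 1) (by omega)
    rwa [show t - 1 + 1 = t from by omega] at h
  have hne1 : t - 1 ≠ t := by omega
  have hne2 : t + 1 ≠ t := by omega
  constructor
  · rw [D_iter ht2 i c hc, show U t (some c) = upFun t c from rfl, upFun_eq hc ht2]
    by_cases hA : c (t + 1) + i ≤ c t
    · rw [if_pos hA]
      have hc1 : IsPartition (Function.update c t (c t - i)) := by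
        rw [isPartition_update_iff hc ht2]; omega
      rw [U_iter ht2 (i + 1) _ hc1, Function.update_self,
        Function.update_of_ne hne1]
      by_cases hB : c t + 1 ≤ c (t - 1)
      · rw [if_pos (by omega : c t - i + (i + 1) ≤ c (t - 1)), if_pos hB]
        have hc2 : IsPartition (Function.update c t (c t + 1)) := by
          rw [isPartition_update_iff hc ht2]; omega
        rw [D_iter ht2 (i + 1) _ hc2, Function.update_self,
          Function.update_of_ne hne2, if_pos (by omega)]
        simp only [Function.update_idem]
        rw [show c t + 1 - (i + 1) = c t - i from by omega]
        rw [U_iter ht2 (i + 1) _ hc1, Function.update_self,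
          Function.update_of_ne hne1, if_pos (by omega)]
        simp only [Function.update_idem]
      · rw [if_neg (by omega : ¬(c t - i + (i + 1) ≤ c (t - 1))), if_neg hB,
          D_none_s11, U_none]
    · rw [if_neg hA, U_none]
      by_cases hB : c t + 1 ≤ c (t - 1)
      · rw [if_pos hB]
        have hc2 : IsPartition (Function.update c t (c t + 1)) := by
          rw [isPartition_update_iff hc ht2]; omega
        rw [D_iter ht2 (i + 1) _ hc2, Function.update_self,
          Function.update_of_ne hne2, if_neg (by omega), U_none]
      · rw [if_neg hB, D_none_s11, U_none]
  · rw [D_iter ht2 (i + 1) c hc]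
    by_cases hA : c (t + 1) + (i + 1) ≤ c t
    · rw [if_pos hA]
      have hc1 : IsPartition (Function.update c t (c t - (i + 1))) := by
        rw [isPartition_update_iff hc ht2]; omega
      rw [U_iter ht2 i _ hc1, U_iter ht2 (i + 1) _ hc1, Function.update_self,
        Function.update_of_ne hne1, if_pos (by omega), if_pos (by omega)]
      simp only [Function.update_idem]
      rw [show c t - (i + 1) + (i + 1) = c t from by omega, Function.update_eq_self]
      rw [show D t (some c) = downFun t c from rfl, downFun_eq hc ht2,
        if_pos (by omega)]
      rw [show c t - (i + 1) + i = c t - 1 from by omega]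
    · rw [if_neg hA, U_none, U_none]
      rfl
end

section
/- As operators on partitions, the operator u_n commutes with the composite u_n u_{n-1} ⋯ u_1; that is, (u_n ⋯ u_1) u_n = u_n (u_n ⋯ u_1). -/
def cn (c : ℕ → ℕ) (n : ℕ) : ℕ → ℕ := fun i => if 1 ≤ i ∧ i ≤ n then c i + 1 else c i

lemma isPartition_cn {c : ℕ → ℕ} (hc : IsPartition c) (n : ℕ) : IsPartition (cn c n) := by
  obtain ⟨h1, h0, N, hN⟩ := hc
  refine ⟨?_, ?_, ⟨max N (n+1), ?_⟩⟩
  · intro i hi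
    have := h1 i hi
    unfold cn
    split_ifs <;> omega
  · simp [cn, h0]
  · intro i hi
    have : c i = 0 := hN i (by omega)
    simp only [cn]
    split_ifs <;> omega

lemma up_iff {c : ℕ → ℕ} {n : ℕ} (hc : IsPartition c) (hn : 1 ≤ n) :
    IsPartition (Function.update c n (c n + 1)) ↔ (2 ≤ n → c n < c (n-1)) := by
  obtain ⟨h1, h0, N, hN⟩ := hc
  constructor
  · intro h h2
    have key := h.1 (n-1) (by omega)
    rw [show n-1+1 = n by omega, Function.update_self,
      Function.update_of_ne (by omega : n - 1 ≠ n)] at key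
    omega
  · intro h
    refine ⟨?_, ?_, ⟨max N (n+1), ?_⟩⟩
    · intro i hi
      rw [Function.update_apply, Function.update_apply]
      split_ifs with ha hb hb
      · omega
      · have hx := h (by omega)
        rw [show n - 1 = i from by omega] at hx
        omega
      · have := h1 i hi
        subst hb
        omega
      · exact h1 i hi
    · rw [Function.update_of_ne (by omega)]; exact h0
    · intro i hi
      rw [Function.update_of_ne (by omega)]
      exact hN i (by omega)

lemma act_none (x : List Γ) : act x none = none := by
  induction x with
  | nil => rfl
  | cons l x ih =>
      simp only [act, List.foldr_cons] at ih ⊢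
      rw [ih]
      cases l.1 <;> simp [U, D]

lemma chain_eval {c : ℕ → ℕ} (hc : IsPartition c) (n : ℕ) :
    act ((List.range n).reverse.map (fun k => ((false, k + 1) : Bool × ℕ))) (some c) =
    some (cn c n) := by
  induction n with
  | zero =>
      simp only [List.range_zero, List.reverse_nil, List.map_nil, act, List.foldr_nil]
      congr 1
      funext i
      simp only [cn]
      split_ifs <;> omega
  | succ n ih =>
      rw [List.range_succ, List.reverse_append, List.reverse_singleton]
      simp only [List.map_cons, List.singleton_append, act, List.foldr_cons] at ih ⊢
      rw [ih]
      show U (n + 1) (some (cn c n)) = _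
      have hcn : IsPartition (cn c n) := isPartition_cn hc n
      have hcond : IsPartition (Function.update (cn c n) (n+1) (cn c n (n+1) + 1)) := by
        rw [up_iff hcn (by omega)]
        intro h2
        have := hc.1 n (by omega)
        simp only [cn, show n + 1 - 1 = n from rfl]
        split_ifs <;> omega
      simp only [U, Option.bind_some, upFun]
      rw [if_pos (And.intro (by omega : 1 ≤ n + 1) hcond)]
      congr 1
      funext i
      by_cases hi : i = n + 1
      · subst hi
        rw [Function.update_self]
        simp only [cn]
        split_ifs <;> omega
      · rw [Function.update_of_ne hi]
        simp only [cn]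
        split_ifs <;> omega

theorem chain_commutes_with_top (n : ℕ) (hn : 1 ≤ n) (c : ℕ → ℕ) (hc : IsPartition c) :
    act ((List.range n).reverse.map (fun k => ((false, k + 1) : Γ))) (U n (some c)) =
    U n (act ((List.range n).reverse.map (fun k => ((false, k + 1) : Γ))) (some c)) := by
  rw [chain_eval hc n]
  have hcn : IsPartition (cn c n) := isPartition_cn hc n
  by_cases h : 2 ≤ n → c n < c (n-1)
  · -- both sides succeed
    have h1 : IsPartition (Function.update c n (c n + 1)) := (up_iff hc hn).mpr h
    have h2 : IsPartition (Function.update (cn c n) n (cn c n n + 1)) := by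
      rw [up_iff hcn hn]
      intro hn2
      have := h hn2
      simp only [cn]
      split_ifs <;> omega
    simp only [U, Option.bind_some, upFun]
    rw [if_pos (And.intro hn h1), if_pos (And.intro hn h2)]
    rw [chain_eval h1 n]
    congr 1
    funext i
    simp only [cn, Function.update_apply]
    split_ifs <;> omega
  · -- both sides fail
    have h1 : ¬ IsPartition (Function.update c n (c n + 1)) := by
      rw [up_iff hc hn]; exact h
    have h2 : ¬ IsPartition (Function.update (cn c n) n (cn c n n + 1)) := by
      rw [up_iff hcn hn]
      intro hk
      apply h
      intro hn2
      have := hk hn2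
      simp only [cn] at this
      split_ifs at this <;> omega
    simp only [U, Option.bind_some, upFun]
    rw [if_neg (fun hx : 1 ≤ n ∧ _ => h1 hx.2), if_neg (fun hx : 1 ≤ n ∧ _ => h2 hx.2)]
    exact act_none _
end
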